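/- Let R be a commutative ring and α ∈ R an element that is not a zero divisor and such that the ideal αR is primary. Then for every positive integer n, the ideal αⁿR is primary. -/

import Mathlib

lemma aux_dvd {R : Type*} [CommRing R] (α : R)
    (hnzd : α ∈ nonZeroDivisors R)
    (hprim : ∀ {x y : R}, x * y ∈ Ideal.span ({α} : Set R) →
      x ∈ Ideal.span ({α} : Set R) ∨ y ∈ (Ideal.span ({α} : Set R)).radical) :
    ∀ (n : ℕ) (a b : R), b ∉ (Ideal.span ({α} : Set R)).radical →
      α ^ (n + 1) ∣ a * b → α ^ (n + 1) ∣ a := by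
  intro n
  induction n with
  | zero =>
    intro a b hb hab
    rw [pow_one] at hab ⊢
    have h1 : a * b ∈ Ideal.span ({α} : Set R) :=
      Ideal.mem_span_singleton.mpr hab
    rcases hprim h1 with h | h
    · exact Ideal.mem_span_singleton.mp h
    · exact absurd h hb
  | succ n ih =>
    intro a b hb hab
    obtain ⟨c, hc⟩ := hab
    have h1 : α ∣ a * b := ⟨α ^ (n + 1) * c, by rw [hc]; ring⟩
    have h2 : α ∣ a := by
      rcases hprim (Ideal.mem_span_singleton.mpr h1) with h | h
      · exact Ideal.mem_span_singleton.mp h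
      · exact absurd h hb
    obtain ⟨a', ha'⟩ := h2
    have key : a' * b = α ^ (n + 1) * c := by
      have : (a' * b - α ^ (n + 1) * c) * α = 0 := by
        have : α * (a' * b) = α * (α ^ (n + 1) * c) := by
          rw [← mul_assoc, ← ha']; rw [hc]; ring
        linear_combination this
      exact eq_of_sub_eq_zero (hnzd.2 _ this)
    obtain ⟨d, hd⟩ := ih a' b hb ⟨c, key⟩
    exact ⟨d, by rw [ha', hd]; ring⟩

/-- If `α` is a non-zero-divisor in a commutative ring `R` and the ideal `αR` is
primary, then for every positive integer `n` the ideal `αⁿR` is primary. -/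
theorem stmt_0 {R : Type*} [CommRing R] (α : R)
    (hnzd : α ∈ nonZeroDivisors R)
    (hprim : (Ideal.span {α}).IsPrimary) :
    ∀ n : ℕ, 0 < n → (Ideal.span {α ^ n}).IsPrimary := by
  rw [Ideal.isPrimary_iff] at hprim
  intro n hn
  rw [Ideal.isPrimary_iff]
  obtain ⟨m, rfl⟩ : ∃ m, n = m + 1 := ⟨n - 1, (Nat.succ_pred_eq_of_pos hn).symm⟩
  constructor
  · intro htop
    apply hprim.1
    rw [Ideal.eq_top_iff_one] at htop ⊢
    have : α ^ (m + 1) ∣ 1 := Ideal.mem_span_singleton.mp htop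
    exact Ideal.mem_span_singleton.mpr (dvd_trans (dvd_pow_self α (Nat.succ_ne_zero m)) this)
  · intro x y hxy
    by_cases hy : y ∈ (Ideal.span ({α} : Set R)).radical
    · right
      have hrad : (Ideal.span ({α ^ (m + 1)} : Set R)).radical
          = (Ideal.span ({α} : Set R)).radical := by
        rw [← Ideal.span_singleton_pow, Ideal.radical_pow _ (Nat.succ_ne_zero m)]
      rw [hrad]
      exact hy
    · left
      exact Ideal.mem_span_singleton.mpr
        (aux_dvd α hnzd hprim.2 m x y hy (Ideal.mem_span_singleton.mp hxy))
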